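/- Let M = ⊕_{i} M_i be a graded vector space with operators v_n (n ∈ ℤ) for each v in an auxiliary space V, an operator L(-1), and suppose: (a) for each u ∈ M and v ∈ V, v_n u = 0 for n sufficiently large; (b) [L(-1), v_{k+1}] = -(k+1)v_k for all k; (c) any u with v_k u = 0 for all v ∈ V, k ≥ 0 lies in M₀. Then for u ∈ M_j with j ≠ 0, if L(-1)u = 0 and there exists v ∈ V with v_k u ≠ 0 for some k, then j = 0; i.e., L(-1): M_j → M_{j+1} is injective for j ≠ 0 provided every nonzero vector is non-vacuum-like outside M₀. -/
import Mathlib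


/-- Li's vacuum-like vector argument: in a graded space M with mode operators v_n
satisfying (a) truncation, (b) the commutator formula [L(-1), v_{k+1}] = -(k+1)v_k, and
(c) vacuum-like vectors lie in M₀, any u ∈ M_j killed by L(-1) but not killed by some
mode must have j = 0; i.e. L(-1) is injective on M_j for j ≠ 0. -/
theorem stmt_11 (M : Type*) [AddCommGroup M] [Module ℝ M]
    (Mgr : ℤ → Submodule ℝ M)
    (hdisj : ∀ i i' : ℤ, i ≠ i' → ∀ x : M, x ∈ Mgr i → x ∈ Mgr i' → x = 0)
    (Vaux : Type*) (A : Vaux → ℤ → Module.End ℝ M) (Lm1 : Module.End ℝ M)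
    (htrunc : ∀ (u : M) (v : Vaux), ∃ N : ℤ, ∀ n : ℤ, N ≤ n → A v n u = 0)
    (hcomm : ∀ (v : Vaux) (k : ℤ),
      Lm1 ∘ₗ A v (k + 1) - A v (k + 1) ∘ₗ Lm1 = -(((k : ℝ) + 1) • A v k))
    (hvac : ∀ u : M, (∀ (v : Vaux) (k : ℤ), 0 ≤ k → A v k u = 0) → u ∈ Mgr 0) :
    ∀ (j : ℤ) (u : M), u ∈ Mgr j → Lm1 u = 0 →
      (∃ (v : Vaux) (k : ℤ), A v k u ≠ 0) → j = 0 := by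
  intro j u hu hL ⟨v0, k0, hne⟩
  -- key: u is vacuum-like
  have key : ∀ (v : Vaux) (k : ℤ), 0 ≤ k → A v k u = 0 := by
    intro v k hk
    obtain ⟨N, hN⟩ := htrunc u v
    -- downward induction
    have main : ∀ d : ℕ, ∀ k : ℤ, 0 ≤ k → N ≤ k + d → A v k u = 0 := by
      intro d
      induction d with
      | zero => intro k _ h; exact hN k (by simpa using h)
      | succ d ih =>
        intro k hk h
        by_cases hNk : N ≤ k + d
        · exact ih k hk hNk
        have hsucc : A v (k + 1) u = 0 := ih (k + 1) (by omega) (by omega)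
        have h1 := congrArg (fun f : Module.End ℝ M => f u) (hcomm v k)
        simp only [LinearMap.sub_apply, LinearMap.comp_apply, LinearMap.neg_apply,
          LinearMap.smul_apply, hL, map_zero, hsucc, sub_zero] at h1
        have h2 : ((k : ℝ) + 1) • A v k u = 0 := by
          rw [← neg_eq_zero, ← h1]
        have hknz : (k : ℝ) + 1 ≠ 0 := by
          have : (0:ℝ) < (k:ℝ) + 1 := by positivity
          linarith
        exact (smul_eq_zero.mp h2).resolve_left hknz
    rcases le_or_gt N k with h | h
    · exact hN k h
    · exact main (N - k).toNat k hk (by omega)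
  have h0 : u ∈ Mgr 0 := hvac u key
  by_contra hj
  exact hne (by rw [hdisj j 0 hj u hu h0, map_zero])
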